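/- Under hyper-generalized recurrence with recurrence 1-forms A and B, if r ≠ 0 and ∇_U r = 0 for all U ∈ V (i.e. r is a nonzero constant), then r/n is an eigenvalue of Ric₀, and the g-dual vectors σ and ρ of A and B are corresponding eigenvectors: Ric₀ σ = (r/n)·σ and Ric₀ ρ = (r/n)·ρ. (Theorem 2.3(b).) -/

import Mathlib

open scoped BigOperators

/-- Kulkarni–Nomizu product of two bilinear forms (as real-valued functions). -/
def KN {V : Type*} (h k : V → V → ℝ) (X Y Z W : V) : ℝ :=
  h X Z * k Y W + h Y W * k X Z - h X W * k Y Z - h Y Z * k X W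

/-- The tensor `G(X,Y,Z,W) = g(X,Z)g(Y,W) - g(Y,Z)g(X,W)`. -/
def Gten {V : Type*} (g : V → V → ℝ) (X Y Z W : V) : ℝ :=
  g X Z * g Y W - g Y Z * g X W

/-- Derivation action of the curvature endomorphism `Rend U V` on a quadrilinear form `T`. -/
def derAct {V : Type*} (Rend : V → V → V → V) (T : V → V → V → V → ℝ)
    (U V' X Y Z W : V) : ℝ :=
  - T (Rend U V' X) Y Z W - T X (Rend U V' Y) Z W
    - T X Y (Rend U V' Z) W - T X Y Z (Rend U V' W)

/-- slot-1 evaluation of a quadrilinear form as a linear map -/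
def appS1 {V : Type*} [AddCommGroup V] [Module ℝ V]
    (R : V →ₗ[ℝ] V →ₗ[ℝ] V →ₗ[ℝ] V →ₗ[ℝ] ℝ) (Y Z W : V) : V →ₗ[ℝ] ℝ where
  toFun X := R X Y Z W
  map_add' x y := by simp
  map_smul' c x := by simp

/-- slot-3 evaluation of a quadrilinear form as a linear map -/
def appS3 {V : Type*} [AddCommGroup V] [Module ℝ V]
    (R : V →ₗ[ℝ] V →ₗ[ℝ] V →ₗ[ℝ] V →ₗ[ℝ] ℝ) (X Y W : V) : V →ₗ[ℝ] ℝ where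
  toFun Z := R X Y Z W
  map_add' x y := by simp
  map_smul' c x := by simp

/-- slots (2,4) of a quadrilinear form as a bilinear map -/
def appS24 {V : Type*} [AddCommGroup V] [Module ℝ V]
    (R : V →ₗ[ℝ] V →ₗ[ℝ] V →ₗ[ℝ] V →ₗ[ℝ] ℝ) (X Z : V) : V →ₗ[ℝ] V →ₗ[ℝ] ℝ :=
  LinearMap.mk₂ ℝ (fun Y W => R X Y Z W) (by intros; simp) (by intros; simp)
    (by intros; simp) (by intros; simp)

@[simp] lemma appS1_apply {V : Type*} [AddCommGroup V] [Module ℝ V]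
    (R : V →ₗ[ℝ] V →ₗ[ℝ] V →ₗ[ℝ] V →ₗ[ℝ] ℝ) (Y Z W X : V) :
    appS1 R Y Z W X = R X Y Z W := rfl

@[simp] lemma appS3_apply {V : Type*} [AddCommGroup V] [Module ℝ V]
    (R : V →ₗ[ℝ] V →ₗ[ℝ] V →ₗ[ℝ] V →ₗ[ℝ] ℝ) (X Y W Z : V) :
    appS3 R X Y W Z = R X Y Z W := rfl

@[simp] lemma appS24_apply {V : Type*} [AddCommGroup V] [Module ℝ V]
    (R : V →ₗ[ℝ] V →ₗ[ℝ] V →ₗ[ℝ] V →ₗ[ℝ] ℝ) (X Z Y W : V) :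
    appS24 R X Z Y W = R X Y Z W := rfl

theorem hgr_eigenvalue_of_ricci_operator {V : Type*} [AddCommGroup V] [Module ℝ V]
    (n : ℕ) (hn : 3 ≤ n)
    (b : Module.Basis (Fin n) ℝ V) (e' : Fin n → V)
    (g : V →ₗ[ℝ] V →ₗ[ℝ] ℝ)
    (hg_symm : ∀ X Y, g X Y = g Y X)
    (hg_nd : ∀ X, (∀ Y, g X Y = 0) → X = 0)
    (hdual : ∀ i j, g (b i) (e' j) = if i = j then (1 : ℝ) else 0)
    (R : V →ₗ[ℝ] V →ₗ[ℝ] V →ₗ[ℝ] V →ₗ[ℝ] ℝ)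
    (hR_ne : R ≠ 0)
    (hR_anti : ∀ X Y Z W, R X Y Z W = - R Y X Z W)
    (hR_pair : ∀ X Y Z W, R X Y Z W = R Z W X Y)
    (Ric : V → V → ℝ)
    (hRic : ∀ X Z, Ric X Z = ∑ i, R X (b i) Z (e' i))
    (r : ℝ) (hr : r = ∑ i, Ric (b i) (e' i))
    (Ric₀ : V →ₗ[ℝ] V)
    (hRic₀ : ∀ X Y, g (Ric₀ X) Y = Ric X Y)
    (D : V →ₗ[ℝ] V →ₗ[ℝ] V →ₗ[ℝ] V →ₗ[ℝ] V →ₗ[ℝ] ℝ)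
    (hBianchi : ∀ X Y Z W U, D X Y Z W U + D Y Z X W U + D Z X Y W U = 0)
    (A B : V →ₗ[ℝ] ℝ) (hA : A ≠ 0) (hB : B ≠ 0)
    (hHGR : ∀ U X Y Z W,
      D U X Y Z W = A U * R X Y Z W + B U * KN (fun a c => g a c) Ric X Y Z W)
    (DRic : V → V → V → ℝ)
    (hDRicDef : ∀ U X Z, DRic U X Z = ∑ i, D U X (b i) Z (e' i))
    (Dr : V → ℝ)
    (hDrDef : ∀ U, Dr U = ∑ i, DRic U (b i) (e' i))
    (hr_ne : r ≠ 0) (hr_const : ∀ U, Dr U = 0)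
    (σ ρ : V)
    (hσ : ∀ X, g σ X = A X) (hρ : ∀ X, g ρ X = B X)
    :
    Module.End.HasEigenvalue (Ric₀ : Module.End ℝ V) (r / (n : ℝ)) ∧
    Ric₀ σ = (r / (n : ℝ)) • σ ∧ Ric₀ ρ = (r / (n : ℝ)) • ρ := by
  have hn0 : (n : ℝ) ≠ 0 := Nat.cast_ne_zero.mpr (by omega)
  -- coordinates
  have coord : ∀ (X : V) (i : Fin n), g X (e' i) = b.repr X i := by
    intro X i
    conv_lhs => rw [← b.sum_repr X]
    rw [map_sum, LinearMap.sum_apply]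
    simp [hdual, Finsupp.single_apply]
  have key1 : ∀ X : V, ∑ i, g X (e' i) • b i = X := by
    intro X
    simp_rw [coord]
    exact b.sum_repr X
  have nd' : ∀ W : V, (∀ j, g W (b j) = 0) → W = 0 := by
    intro W h
    refine hg_nd W fun Y => ?_
    conv_lhs => rw [← b.sum_repr Y]
    rw [map_sum]
    simp [h]
  have key2 : ∀ X : V, ∑ i, g X (b i) • e' i = X := by
    intro X
    have h : ∀ j, g (∑ i, g X (b i) • e' i - X) (b j) = 0 := by
      intro j
      rw [map_sub, LinearMap.sub_apply, map_sum, LinearMap.sum_apply]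
      have : ∀ i, (g (g X (b i) • e' i)) (b j) = g X (b i) * (if j = i then (1:ℝ) else 0) := by
        intro i
        rw [map_smul, LinearMap.smul_apply, smul_eq_mul, hg_symm (e' i) (b j), hdual]
      simp_rw [this]
      simp
    have := nd' _ h
    exact sub_eq_zero.mp this
  have expand1 : ∀ (f : V →ₗ[ℝ] ℝ) (X : V), ∑ i, g X (e' i) * f (b i) = f X := by
    intro f X
    conv_rhs => rw [← key1 X]
    rw [map_sum]
    simp [smul_eq_mul]
  have expand2 : ∀ (f : V →ₗ[ℝ] ℝ) (X : V), ∑ i, g X (b i) * f (e' i) = f X := by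
    intro f X
    conv_rhs => rw [← key2 X]
    rw [map_sum]
    simp [smul_eq_mul]
  have trace_g : ∑ i, g (b i) (e' i) = (n : ℝ) := by
    simp [hdual]
  -- swap of the two traces of a bilinear form
  have swap : ∀ (T : V →ₗ[ℝ] V →ₗ[ℝ] ℝ), ∑ i, T (e' i) (b i) = ∑ i, T (b i) (e' i) := by
    intro T
    calc ∑ i, T (e' i) (b i)
        = ∑ i, ∑ j, g (e' i) (e' j) * T (b j) (b i) := by
          refine Finset.sum_congr rfl fun i _ => ?_
          conv_lhs => rw [← key1 (e' i)]
          rw [map_sum, LinearMap.sum_apply]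
          simp [smul_eq_mul]
      _ = ∑ j, ∑ i, g (e' i) (e' j) * T (b j) (b i) := Finset.sum_comm
      _ = ∑ j, T (b j) (e' j) := by
          refine Finset.sum_congr rfl fun j _ => ?_
          have h : ∀ i, g (e' i) (e' j) = g (e' j) (e' i) := fun i => hg_symm _ _
          simp_rw [h]
          exact expand1 (T (b j)) (e' j)
  -- curvature symmetry in last two slots
  have hR34 : ∀ X Y Z W, R X Y Z W = - R X Y W Z := by
    intro X Y Z W
    rw [hR_pair X Y Z W, hR_anti Z W X Y, hR_pair W Z X Y]
  -- Ricci symmetry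
  have Ric_symm : ∀ X Z, Ric X Z = Ric Z X := by
    intro X Z
    rw [hRic X Z, hRic Z X]
    calc ∑ i, R X (b i) Z (e' i)
        = ∑ i, appS24 R X Z (e' i) (b i) := (swap (appS24 R X Z)).symm
      _ = ∑ i, R Z (b i) X (e' i) := by
          refine Finset.sum_congr rfl fun i _ => ?_
          rw [appS24_apply]
          exact (hR_pair Z (b i) X (e' i)).symm
  -- contraction lemmas for Ric
  have RicC1 : ∀ X Z, ∑ i, g X (e' i) * Ric (b i) Z = Ric X Z := by
    intro X Z
    calc ∑ i, g X (e' i) * Ric (b i) Z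
        = ∑ i, ∑ j, g X (e' i) * R (b i) (b j) Z (e' j) := by
          simp_rw [hRic, Finset.mul_sum]
      _ = ∑ j, ∑ i, g X (e' i) * R (b i) (b j) Z (e' j) := Finset.sum_comm
      _ = ∑ j, R X (b j) Z (e' j) := Finset.sum_congr rfl fun j _ =>
          expand1 (appS1 R (b j) Z (e' j)) X
      _ = Ric X Z := (hRic X Z).symm
  have RicC2 : ∀ X W, ∑ i, g W (b i) * Ric X (e' i) = Ric X W := by
    intro X W
    calc ∑ i, g W (b i) * Ric X (e' i)
        = ∑ i, ∑ j, g W (b i) * R X (b j) (e' i) (e' j) := by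
          simp_rw [hRic, Finset.mul_sum]
      _ = ∑ j, ∑ i, g W (b i) * R X (b j) (e' i) (e' j) := Finset.sum_comm
      _ = ∑ j, R X (b j) W (e' j) := Finset.sum_congr rfl fun j _ =>
          expand2 (appS3 R X (b j) (e' j)) W
      _ = Ric X W := (hRic X W).symm
  have cARic : ∀ X, ∑ i, A (b i) * Ric X (e' i) = Ric X σ := by
    intro X
    have h : ∀ i, A (b i) = g σ (b i) := fun i => (hσ _).symm
    simp_rw [h]
    exact RicC2 X σ
  have cBRic : ∀ X, ∑ i, B (b i) * Ric X (e' i) = Ric X ρ := by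
    intro X
    have h : ∀ i, B (b i) = g ρ (b i) := fun i => (hρ _).symm
    simp_rw [h]
    exact RicC2 X ρ
  have cBg : ∀ X, ∑ i, B (b i) * g X (e' i) = g X ρ := by
    intro X
    have h : ∀ i, B (b i) = g ρ (b i) := fun i => (hρ _).symm
    simp_rw [h]
    exact expand2 (g X) ρ
  -- contracted KN in slots (2,4)
  have sumKN24 : ∀ X Z, ∑ i, KN (fun a c => g a c) Ric X (b i) Z (e' i)
      = r * g X Z + ((n : ℝ) - 2) * Ric X Z := by
    intro X Z
    have h3 : ∑ i, g (b i) Z * Ric X (e' i) = Ric X Z := by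
      have h : ∀ i, g (b i) Z = g Z (b i) := fun i => hg_symm _ _
      simp_rw [h]
      exact RicC2 X Z
    calc ∑ i, KN (fun a c => g a c) Ric X (b i) Z (e' i)
        = ∑ i, (g X Z * Ric (b i) (e' i) + g (b i) (e' i) * Ric X Z
            - g X (e' i) * Ric (b i) Z - g (b i) Z * Ric X (e' i)) := by
          simp only [KN]
      _ = (∑ i, g X Z * Ric (b i) (e' i)) + (∑ i, g (b i) (e' i) * Ric X Z)
            - (∑ i, g X (e' i) * Ric (b i) Z) - (∑ i, g (b i) Z * Ric X (e' i)) := by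
          rw [Finset.sum_sub_distrib, Finset.sum_sub_distrib, Finset.sum_add_distrib]
      _ = g X Z * r + (n : ℝ) * Ric X Z - Ric X Z - Ric X Z := by
          rw [← Finset.mul_sum, ← hr, ← Finset.sum_mul, trace_g, RicC1, h3]
      _ = r * g X Z + ((n : ℝ) - 2) * Ric X Z := by ring
  -- formula for DRic
  have DRic_formula : ∀ U X Z, DRic U X Z
      = A U * Ric X Z + B U * (r * g X Z + ((n : ℝ) - 2) * Ric X Z) := by
    intro U X Z
    rw [hDRicDef]
    calc ∑ i, D U X (b i) Z (e' i)
        = ∑ i, (A U * R X (b i) Z (e' i)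
            + B U * KN (fun a c => g a c) Ric X (b i) Z (e' i)) := by
          exact Finset.sum_congr rfl fun i _ => hHGR U X (b i) Z (e' i)
      _ = A U * (∑ i, R X (b i) Z (e' i))
            + B U * (∑ i, KN (fun a c => g a c) Ric X (b i) Z (e' i)) := by
          rw [Finset.sum_add_distrib, ← Finset.mul_sum, ← Finset.mul_sum]
      _ = A U * Ric X Z + B U * (r * g X Z + ((n : ℝ) - 2) * Ric X Z) := by
          rw [← hRic, sumKN24]
  -- formula for Dr, and proportionality of A and B
  have Dr_formula : ∀ U, Dr U = r * (A U + 2 * ((n : ℝ) - 1) * B U) := by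
    intro U
    rw [hDrDef]
    simp_rw [DRic_formula]
    rw [Finset.sum_add_distrib, ← Finset.mul_sum, ← Finset.mul_sum, ← hr]
    have h : ∑ i, (r * g (b i) (e' i) + ((n : ℝ) - 2) * Ric (b i) (e' i))
        = r * (n : ℝ) + ((n : ℝ) - 2) * r := by
      rw [Finset.sum_add_distrib, ← Finset.mul_sum, ← Finset.mul_sum, trace_g, ← hr]
    rw [h]
    ring
  have hAB : ∀ U, A U = -(2 * ((n : ℝ) - 1)) * B U := by
    intro U
    have h := hr_const U
    rw [Dr_formula U] at h
    rcases mul_eq_zero.mp h with h' | h'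
    · exact absurd h' hr_ne
    · linarith
  have hσρ : σ = (-(2 * ((n : ℝ) - 1))) • ρ := by
    have h : ∀ Y, g (σ - (-(2 * ((n : ℝ) - 1))) • ρ) Y = 0 := by
      intro Y
      rw [map_sub, LinearMap.sub_apply, map_smul, LinearMap.smul_apply, smul_eq_mul,
        hσ, hρ, hAB Y]
      ring
    exact sub_eq_zero.mp (hg_nd _ h)
  -- Bianchi contracted once
  have bianchi_c : ∀ X Y W, DRic X Y W - DRic Y X W
      + (R X Y W σ + KN (fun a c => g a c) Ric X Y W ρ) = 0 := by
    intro X Y W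
    have h0 : ∑ i, (D X Y (b i) W (e' i) + D Y (b i) X W (e' i) + D (b i) X Y W (e' i)) = 0 :=
      Finset.sum_eq_zero fun i _ => hBianchi X Y (b i) W (e' i)
    rw [Finset.sum_add_distrib, Finset.sum_add_distrib] at h0
    have ha : ∑ i, D X Y (b i) W (e' i) = DRic X Y W := (hDRicDef X Y W).symm
    have hbt : ∀ i : Fin n, D Y (b i) X W (e' i) = - D Y X (b i) W (e' i) := by
      intro i
      rw [hHGR, hHGR, hR_anti (b i) X W (e' i)]
      simp only [KN]
      ring
    have hb : ∑ i, D Y (b i) X W (e' i) = - DRic Y X W := by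
      simp_rw [hbt]
      rw [Finset.sum_neg_distrib, ← hDRicDef]
    have hct : ∀ i : Fin n, D (b i) X Y W (e' i)
        = A (b i) * R X Y W (e' i) + B (b i) * KN (fun a c => g a c) Ric X Y W (e' i) :=
      fun i => hHGR (b i) X Y W (e' i)
    have hc : ∑ i, D (b i) X Y W (e' i) = R X Y W σ + KN (fun a c => g a c) Ric X Y W ρ := by
      simp_rw [hct]
      rw [Finset.sum_add_distrib]
      have h1 : ∑ i, A (b i) * R X Y W (e' i) = R X Y W σ := by
        have h : ∀ i, A (b i) = g σ (b i) := fun i => (hσ _).symm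
        simp_rw [h]
        exact expand2 (R X Y W) σ
      have h2 : ∑ i, B (b i) * KN (fun a c => g a c) Ric X Y W (e' i)
          = KN (fun a c => g a c) Ric X Y W ρ := by
        calc ∑ i, B (b i) * KN (fun a c => g a c) Ric X Y W (e' i)
            = ∑ i, (g X W * (B (b i) * Ric Y (e' i)) + (B (b i) * g Y (e' i)) * Ric X W
                - (B (b i) * g X (e' i)) * Ric Y W - g Y W * (B (b i) * Ric X (e' i))) := by
              refine Finset.sum_congr rfl fun i _ => ?_
              simp only [KN]
              ring
          _ = g X W * (∑ i, B (b i) * Ric Y (e' i)) + (∑ i, B (b i) * g Y (e' i)) * Ric X W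
                - (∑ i, B (b i) * g X (e' i)) * Ric Y W
                - g Y W * (∑ i, B (b i) * Ric X (e' i)) := by
              rw [Finset.sum_sub_distrib, Finset.sum_sub_distrib, Finset.sum_add_distrib,
                ← Finset.mul_sum, ← Finset.mul_sum, ← Finset.sum_mul, ← Finset.sum_mul]
          _ = KN (fun a c => g a c) Ric X Y W ρ := by
              rw [cBRic, cBRic, cBg, cBg]
              simp only [KN]
        done
      rw [h1, h2]
    linarith [h0, ha, hb, hc]
  -- the trace of R (b i) Y (e' i) σ
  have c5 : ∀ Y, ∑ i, R (b i) Y (e' i) σ = Ric σ Y := by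
    intro Y
    have step : ∀ i : Fin n, R (b i) Y (e' i) σ = appS24 R σ Y (e' i) (b i) := by
      intro i
      rw [appS24_apply]
      rw [hR_pair (b i) Y (e' i) σ, hR_anti (e' i) σ (b i) Y, hR34 σ (e' i) (b i) Y, neg_neg]
    simp_rw [step]
    rw [swap (appS24 R σ Y)]
    rw [hRic σ Y]
    exact Finset.sum_congr rfl fun i _ => appS24_apply R σ Y (b i) (e' i)
  -- the trace of KN (b i) Y (e' i) ρ
  have c6 : ∀ Y, ∑ i, KN (fun a c => g a c) Ric (b i) Y (e' i) ρ
      = ((n : ℝ) - 2) * Ric Y ρ + r * g Y ρ := by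
    intro Y
    have h3 : ∑ i, g (b i) ρ * Ric Y (e' i) = Ric Y ρ := by
      have h : ∀ i, g (b i) ρ = g ρ (b i) := fun i => hg_symm _ _
      simp_rw [h]
      exact RicC2 Y ρ
    calc ∑ i, KN (fun a c => g a c) Ric (b i) Y (e' i) ρ
        = ∑ i, (g (b i) (e' i) * Ric Y ρ + g Y ρ * Ric (b i) (e' i)
            - g (b i) ρ * Ric Y (e' i) - g Y (e' i) * Ric (b i) ρ) := by
          simp only [KN]
      _ = (∑ i, g (b i) (e' i)) * Ric Y ρ + g Y ρ * (∑ i, Ric (b i) (e' i))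
            - (∑ i, g (b i) ρ * Ric Y (e' i)) - (∑ i, g Y (e' i) * Ric (b i) ρ) := by
          rw [Finset.sum_sub_distrib, Finset.sum_sub_distrib, Finset.sum_add_distrib,
            ← Finset.sum_mul, ← Finset.mul_sum]
      _ = (n : ℝ) * Ric Y ρ + g Y ρ * r - Ric Y ρ - Ric Y ρ := by
          rw [trace_g, ← hr, h3, RicC1]
      _ = ((n : ℝ) - 2) * Ric Y ρ + r * g Y ρ := by ring
  -- the main contracted identity
  have main : ∀ Y, 2 * Ric Y σ + 2 * ((n : ℝ) - 2) * Ric Y ρ + 2 * r * g Y ρ = 0 := by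
    intro Y
    have h0 : ∑ i, (DRic (b i) Y (e' i) - DRic Y (b i) (e' i)
        + (R (b i) Y (e' i) σ + KN (fun a c => g a c) Ric (b i) Y (e' i) ρ)) = 0 :=
      Finset.sum_eq_zero fun i _ => bianchi_c (b i) Y (e' i)
    rw [Finset.sum_add_distrib, Finset.sum_sub_distrib, Finset.sum_add_distrib] at h0
    have h2 : ∑ i, DRic Y (b i) (e' i) = 0 := by rw [← hDrDef]; exact hr_const Y
    have h1 : ∑ i, DRic (b i) Y (e' i)
        = Ric Y σ + (r * g Y ρ + ((n : ℝ) - 2) * Ric Y ρ) := by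
      simp_rw [DRic_formula]
      rw [Finset.sum_add_distrib]
      have ha : ∑ i, A (b i) * Ric Y (e' i) = Ric Y σ := cARic Y
      have hbb : ∑ i, B (b i) * (r * g Y (e' i) + ((n : ℝ) - 2) * Ric Y (e' i))
          = r * g Y ρ + ((n : ℝ) - 2) * Ric Y ρ := by
        calc ∑ i, B (b i) * (r * g Y (e' i) + ((n : ℝ) - 2) * Ric Y (e' i))
            = ∑ i, (r * (B (b i) * g Y (e' i)) + ((n : ℝ) - 2) * (B (b i) * Ric Y (e' i))) := by
              refine Finset.sum_congr rfl fun i _ => ?_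
              ring
          _ = r * (∑ i, B (b i) * g Y (e' i)) + ((n : ℝ) - 2) * (∑ i, B (b i) * Ric Y (e' i)) := by
              rw [Finset.sum_add_distrib, ← Finset.mul_sum, ← Finset.mul_sum]
          _ = r * g Y ρ + ((n : ℝ) - 2) * Ric Y ρ := by rw [cBg, cBRic]
      rw [ha, hbb]
    rw [h1, h2, c5, c6] at h0
    have hs : Ric σ Y = Ric Y σ := Ric_symm σ Y
    linarith [h0, hs]
  -- Ric smul in second slot
  have Ric_smul : ∀ (X : V) (c : ℝ) (Z : V), Ric X (c • Z) = c * Ric X Z := by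
    intro X c Z
    rw [hRic, hRic, Finset.mul_sum]
    refine Finset.sum_congr rfl fun i _ => ?_
    rw [map_smul, LinearMap.smul_apply, smul_eq_mul]
  -- the eigen-equation for ρ
  have Ricρ : ∀ Y, Ric Y ρ * (n : ℝ) = r * g Y ρ := by
    intro Y
    have hm := main Y
    rw [hσρ, Ric_smul] at hm
    linear_combination (-1/2 : ℝ) * hm
  have Ric0ρ : Ric₀ ρ = (r / (n : ℝ)) • ρ := by
    have h : ∀ Y, g (Ric₀ ρ - (r / (n : ℝ)) • ρ) Y = 0 := by
      intro Y
      rw [map_sub, LinearMap.sub_apply, map_smul, LinearMap.smul_apply, smul_eq_mul,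
        hRic₀]
      have h1 : Ric ρ Y = (r / (n : ℝ)) * g ρ Y := by
        have := Ricρ Y
        rw [Ric_symm ρ Y, hg_symm ρ Y]
        field_simp
        linarith [this]
      rw [h1]
      ring
    exact sub_eq_zero.mp (hg_nd _ h)
  have Ric0σ : Ric₀ σ = (r / (n : ℝ)) • σ := by
    rw [hσρ, map_smul, Ric0ρ, smul_smul, smul_smul, mul_comm]
  have hρ_ne : ρ ≠ 0 := by
    intro h
    apply hB
    apply LinearMap.ext
    intro X
    rw [← hρ X, h]
    simp
  refine ⟨?_, Ric0σ, Ric0ρ⟩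
  exact Module.End.hasEigenvalue_of_hasEigenvector
    ⟨Module.End.mem_eigenspace_iff.mpr Ric0ρ, hρ_ne⟩
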